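/- arXiv:0806.0024 — 4 statements merged into one kernel-verified Lean document; each statement's English description precedes it below -/
import Mathlib

section
/- The trilinear, totally antisymmetric bracket on ℂ⁴ determined on the standard basis by [e₁,e₂,e₃] = −e₄, [e₁,e₂,e₄] = e₃, [e₁,e₃,e₄] = −e₂, [e₂,e₃,e₄] = e₁ satisfies the Jacobi identity of the third kind; hence ℂ⁴ with this bracket is a LATKe (denoted L₃). -/
/-!
STATEMENT 1: The trilinear, totally antisymmetric bracket on ℂ⁴ determined on the
standard basis `e₁, e₂, e₃, e₄` (here `E 0, E 1, E 2, E 3`) by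
`[e₁,e₂,e₃] = −e₄`, `[e₁,e₂,e₄] = e₃`, `[e₁,e₃,e₄] = −e₂`, `[e₂,e₃,e₄] = e₁`
satisfies the Jacobi identity of the third kind; hence ℂ⁴ with this bracket
is a LATKe (denoted L₃).
-/

/-- A trilinear bracket on `L`, encoded as iterated linear maps. -/
abbrev TriBracket (k L : Type*) [Field k] [AddCommGroup L] [Module k L] : Type _ :=
  L →ₗ[k] L →ₗ[k] L →ₗ[k] L

variable {k L : Type*} [Field k] [AddCommGroup L] [Module k L]

/-- Total antisymmetry of a trilinear bracket. -/
def IsAlt3 (b : TriBracket k L) : Prop :=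
  (∀ x y z : L, b x y z = - b y x z) ∧ (∀ x y z : L, b x y z = - b x z y)

/-- The Jacobi identity of the third kind. -/
def Jacobi3 (b : TriBracket k L) : Prop :=
  ∀ x y z₁ z₂ z₃ : L,
    b x y (b z₁ z₂ z₃)
      = b (b x y z₁) z₂ z₃ + b z₁ (b x y z₂) z₃ + b z₁ z₂ (b x y z₃)

/-- The `i`-th standard basis vector of `ℂ⁴`. -/
noncomputable def E (i : Fin 4) : Fin 4 → ℂ := Pi.single i 1

/-- The defining values of the bracket of `L₃` on the standard basis:
`[e₁,e₂,e₃] = −e₄`, `[e₁,e₂,e₄] = e₃`, `[e₁,e₃,e₄] = −e₂`, `[e₂,e₃,e₄] = e₁`. -/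
def L3Values (b : TriBracket ℂ (Fin 4 → ℂ)) : Prop :=
  b (E 0) (E 1) (E 2) = - E 3 ∧ b (E 0) (E 1) (E 3) = E 2 ∧
  b (E 0) (E 2) (E 3) = - E 1 ∧ b (E 1) (E 2) (E 3) = E 0

/-- Any trilinear totally antisymmetric bracket on `ℂ⁴` taking the values of the
`L₃` bracket on the standard basis satisfies the Jacobi identity of the third
kind; hence `ℂ⁴` with this bracket is a LATKe. -/
theorem L3_jacobi3 (b : TriBracket ℂ (Fin 4 → ℂ))
    (halt : IsAlt3 b) (hval : L3Values b) : Jacobi3 b := by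
  obtain ⟨h12, h23⟩ := halt
  have p_acb : ∀ x y z : Fin 4 → ℂ, b x z y = - b x y z := fun x y z => h23 x z y
  have p_bac : ∀ x y z : Fin 4 → ℂ, b y x z = - b x y z := fun x y z => h12 y x z
  have p_bca : ∀ x y z : Fin 4 → ℂ, b y z x = b x y z := by
    intro x y z
    rw [h12 y z x, h23 z y x, h12 z x y, h23 x z y, neg_neg, neg_neg]
  have p_cab : ∀ x y z : Fin 4 → ℂ, b z x y = b x y z := by
    intro x y z
    rw [h12 z x y, h23 x z y, neg_neg]
  have p_cba : ∀ x y z : Fin 4 → ℂ, b z y x = - b x y z := by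
    intro x y z
    rw [h12 z y x, p_bca x y z]
  have z12 : ∀ v w : Fin 4 → ℂ, b v v w = 0 := by
    intro v w
    have h := h12 v v w
    have h2 : (2 : ℂ) • b v v w = 0 := by
      rw [two_smul]; nth_rewrite 2 [h]; simp
    simpa using h2
  have z23 : ∀ v w : Fin 4 → ℂ, b v w w = 0 := by
    intro v w
    have h := h23 v w w
    have h2 : (2 : ℂ) • b v w w = 0 := by
      rw [two_smul]; nth_rewrite 2 [h]; simp
    simpa using h2
  have z13 : ∀ v w : Fin 4 → ℂ, b v w v = 0 := by
    intro v w
    have h := p_cba v w v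
    have h2 : (2 : ℂ) • b v w v = 0 := by
      rw [two_smul]; nth_rewrite 2 [h]; simp
    simpa using h2
  have t012 : b (E 0) (E 1) (E 2) = - E 3 := hval.1
  have t021 : b (E 0) (E 2) (E 1) = E 3 := by
    rw [p_acb (E 0) (E 1) (E 2), hval.1]; all_goals module
  have t102 : b (E 1) (E 0) (E 2) = E 3 := by
    rw [p_bac (E 0) (E 1) (E 2), hval.1]; all_goals module
  have t120 : b (E 1) (E 2) (E 0) = - E 3 := by
    rw [p_bca (E 0) (E 1) (E 2), hval.1]; all_goals module
  have t201 : b (E 2) (E 0) (E 1) = - E 3 := by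
    rw [p_cab (E 0) (E 1) (E 2), hval.1]; all_goals module
  have t210 : b (E 2) (E 1) (E 0) = E 3 := by
    rw [p_cba (E 0) (E 1) (E 2), hval.1]; all_goals module
  have t013 : b (E 0) (E 1) (E 3) = E 2 := hval.2.1
  have t031 : b (E 0) (E 3) (E 1) = - E 2 := by
    rw [p_acb (E 0) (E 1) (E 3), hval.2.1]; all_goals module
  have t103 : b (E 1) (E 0) (E 3) = - E 2 := by
    rw [p_bac (E 0) (E 1) (E 3), hval.2.1]; all_goals module
  have t130 : b (E 1) (E 3) (E 0) = E 2 := by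
    rw [p_bca (E 0) (E 1) (E 3), hval.2.1]; all_goals module
  have t301 : b (E 3) (E 0) (E 1) = E 2 := by
    rw [p_cab (E 0) (E 1) (E 3), hval.2.1]; all_goals module
  have t310 : b (E 3) (E 1) (E 0) = - E 2 := by
    rw [p_cba (E 0) (E 1) (E 3), hval.2.1]; all_goals module
  have t023 : b (E 0) (E 2) (E 3) = - E 1 := hval.2.2.1
  have t032 : b (E 0) (E 3) (E 2) = E 1 := by
    rw [p_acb (E 0) (E 2) (E 3), hval.2.2.1]; all_goals module
  have t203 : b (E 2) (E 0) (E 3) = E 1 := by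
    rw [p_bac (E 0) (E 2) (E 3), hval.2.2.1]; all_goals module
  have t230 : b (E 2) (E 3) (E 0) = - E 1 := by
    rw [p_bca (E 0) (E 2) (E 3), hval.2.2.1]; all_goals module
  have t302 : b (E 3) (E 0) (E 2) = - E 1 := by
    rw [p_cab (E 0) (E 2) (E 3), hval.2.2.1]; all_goals module
  have t320 : b (E 3) (E 2) (E 0) = E 1 := by
    rw [p_cba (E 0) (E 2) (E 3), hval.2.2.1]; all_goals module
  have t123 : b (E 1) (E 2) (E 3) = E 0 := hval.2.2.2
  have t132 : b (E 1) (E 3) (E 2) = - E 0 := by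
    rw [p_acb (E 1) (E 2) (E 3), hval.2.2.2]; all_goals module
  have t213 : b (E 2) (E 1) (E 3) = - E 0 := by
    rw [p_bac (E 1) (E 2) (E 3), hval.2.2.2]; all_goals module
  have t231 : b (E 2) (E 3) (E 1) = E 0 := by
    rw [p_bca (E 1) (E 2) (E 3), hval.2.2.2]; all_goals module
  have t312 : b (E 3) (E 1) (E 2) = E 0 := by
    rw [p_cab (E 1) (E 2) (E 3), hval.2.2.2]; all_goals module
  have t321 : b (E 3) (E 2) (E 1) = - E 0 := by
    rw [p_cba (E 1) (E 2) (E 3), hval.2.2.2]; all_goals module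
  have expand : ∀ v : Fin 4 → ℂ, v = v 0 • E 0 + v 1 • E 1 + v 2 • E 2 + v 3 • E 3 := by
    intro v
    funext j
    fin_cases j <;> simp [E, Pi.single_apply]
  have hB : ∀ x y z : Fin 4 → ℂ, b x y z = (x 1 * y 2 * z 3 - x 1 * y 3 * z 2 - x 2 * y 1 * z 3 + x 2 * y 3 * z 1 + x 3 * y 1 * z 2 - x 3 * y 2 * z 1) • E 0 + (-(x 0 * y 2 * z 3 - x 0 * y 3 * z 2 - x 2 * y 0 * z 3 + x 2 * y 3 * z 0 + x 3 * y 0 * z 2 - x 3 * y 2 * z 0)) • E 1 + (x 0 * y 1 * z 3 - x 0 * y 3 * z 1 - x 1 * y 0 * z 3 + x 1 * y 3 * z 0 + x 3 * y 0 * z 1 - x 3 * y 1 * z 0) • E 2 + (-(x 0 * y 1 * z 2 - x 0 * y 2 * z 1 - x 1 * y 0 * z 2 + x 1 * y 2 * z 0 + x 2 * y 0 * z 1 - x 2 * y 1 * z 0)) • E 3 := by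
    intro x y z
    conv_lhs => rw [expand x, expand y, expand z]
    simp only [map_add, map_smul, LinearMap.add_apply, LinearMap.smul_apply,
      t012, t021, t102, t120, t201, t210, t013, t031, t103, t130, t301, t310, t023, t032, t203, t230, t302, t320, t123, t132, t213, t231, t312, t321,
      z12, z23, z13, smul_zero, LinearMap.zero_apply, add_zero, zero_add,
      smul_neg, smul_smul]
    module
  have hc0 : ∀ x y z : Fin 4 → ℂ, b x y z 0 = (x 1 * y 2 * z 3 - x 1 * y 3 * z 2 - x 2 * y 1 * z 3 + x 2 * y 3 * z 1 + x 3 * y 1 * z 2 - x 3 * y 2 * z 1) := by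
    intro x y z
    rw [hB x y z]
    simp [E, Pi.single_apply]
  have hc1 : ∀ x y z : Fin 4 → ℂ, b x y z 1 = (-(x 0 * y 2 * z 3 - x 0 * y 3 * z 2 - x 2 * y 0 * z 3 + x 2 * y 3 * z 0 + x 3 * y 0 * z 2 - x 3 * y 2 * z 0)) := by
    intro x y z
    rw [hB x y z]
    simp [E, Pi.single_apply]
  have hc2 : ∀ x y z : Fin 4 → ℂ, b x y z 2 = (x 0 * y 1 * z 3 - x 0 * y 3 * z 1 - x 1 * y 0 * z 3 + x 1 * y 3 * z 0 + x 3 * y 0 * z 1 - x 3 * y 1 * z 0) := by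
    intro x y z
    rw [hB x y z]
    simp [E, Pi.single_apply]
  have hc3 : ∀ x y z : Fin 4 → ℂ, b x y z 3 = (-(x 0 * y 1 * z 2 - x 0 * y 2 * z 1 - x 1 * y 0 * z 2 + x 1 * y 2 * z 0 + x 2 * y 0 * z 1 - x 2 * y 1 * z 0)) := by
    intro x y z
    rw [hB x y z]
    simp [E, Pi.single_apply]
  intro x y z₁ z₂ z₃
  rw [hB x y (b z₁ z₂ z₃), hB (b x y z₁) z₂ z₃, hB z₁ (b x y z₂) z₃, hB z₁ z₂ (b x y z₃)]
  simp only [hc0, hc1, hc2, hc3]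
  module
end

section
/- The LATKe L₃ is simple: its bracket is not identically zero, and its only ideals are 0 and all of ℂ⁴. -/
variable {k L : Type*} [Field k] [AddCommGroup L] [Module k L]

/-- An ideal of a LATKe: a subspace `I` with `[L, L, I] ⊆ I`. -/
def IsLATKeIdeal (b : TriBracket k L) (I : Submodule k L) : Prop :=
  ∀ x y : L, ∀ z ∈ I, b x y z ∈ I

/-- A LATKe is simple if its bracket is not identically zero and its only
ideals are `⊥` and `⊤`. -/
def IsSimpleLATKe (b : TriBracket k L) : Prop :=
  (∃ x y z : L, b x y z ≠ 0) ∧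
    ∀ I : Submodule k L, IsLATKeIdeal b I → I = ⊥ ∨ I = ⊤

lemma E_ne_zero (i : Fin 4) : E i ≠ 0 := by
  intro h
  have := congrFun h i
  simp [E] at this

lemma E_decomp (x : Fin 4 → ℂ) :
    x = x 0 • E 0 + x 1 • E 1 + x 2 • E 2 + x 3 • E 3 := by
  funext i
  fin_cases i <;> simp [E, Pi.single_apply]

/-- The LATKe `L₃` — that is, `ℂ⁴` with (the unique) trilinear totally
antisymmetric bracket taking the prescribed values on the standard basis —
is simple: its bracket is not identically zero, and its only ideals are
`⊥` and `⊤`. -/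
theorem L3_simple (b : TriBracket ℂ (Fin 4 → ℂ))
    (halt : IsAlt3 b) (hval : L3Values b) : IsSimpleLATKe b := by
  obtain ⟨h12, h23⟩ := halt
  obtain ⟨hv1, hv2, hv3, hv4⟩ := hval
  -- zero lemmas
  have hxx : ∀ x z : Fin 4 → ℂ, b x x z = 0 := by
    intro x z
    have h := h12 x x z
    have h2 : (2 : ℂ) • b x x z = 0 := by
      rw [two_smul]; nth_rewrite 1 [h]; exact neg_add_cancel _
    simpa using (smul_eq_zero.mp h2).resolve_left (by norm_num)
  have hzz : ∀ x z : Fin 4 → ℂ, b x z z = 0 := by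
    intro x z
    have h := h23 x z z
    have h2 : (2 : ℂ) • b x z z = 0 := by
      rw [two_smul]; nth_rewrite 1 [h]; exact neg_add_cancel _
    simpa using (smul_eq_zero.mp h2).resolve_left (by norm_num)
  have hxyx : ∀ x y : Fin 4 → ℂ, b x y x = 0 := by
    intro x y
    rw [h23 x y x, hxx, neg_zero]
  -- all bracket values on basis vectors
  have c230 : b (E 2) (E 3) (E 0) = - E 1 := by
    rw [h23 (E 2) (E 3) (E 0), h12 (E 2) (E 0) (E 3), hv3]
    simp
  have c231 : b (E 2) (E 3) (E 1) = E 0 := by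
    rw [h23 (E 2) (E 3) (E 1), h12 (E 2) (E 1) (E 3), hv4]
    simp
  have c021 : b (E 0) (E 2) (E 1) = E 3 := by
    rw [h23 (E 0) (E 2) (E 1), hv1]
    simp
  have c031 : b (E 0) (E 3) (E 1) = - E 2 := by
    rw [h23 (E 0) (E 3) (E 1), hv2]
  have c032 : b (E 0) (E 3) (E 2) = E 1 := by
    rw [h23 (E 0) (E 3) (E 2), hv3]
    simp
  have c120 : b (E 1) (E 2) (E 0) = - E 3 := by
    rw [h23 (E 1) (E 2) (E 0), h12 (E 1) (E 0) (E 2), hv1]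
    simp
  -- part 1: bracket nonzero
  refine ⟨⟨E 0, E 1, E 2, ?_⟩, ?_⟩
  · rw [hv1]
    simpa using E_ne_zero 3
  -- part 2: ideals
  intro I hI
  by_cases hbot : I = ⊥
  · exact Or.inl hbot
  right
  obtain ⟨v, hvI, hvne⟩ : ∃ v ∈ I, v ≠ 0 := by
    by_contra h
    push_neg at h
    exact hbot (eq_bot_iff.mpr fun x hx => (Submodule.mem_bot ℂ).mpr (h x hx))
  -- key: E 3 ∈ I → I = ⊤
  have key3 : E 3 ∈ I → I = ⊤ := by
    intro h3
    have h2' : E 2 ∈ I := by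
      have := hI (E 0) (E 1) _ h3; rwa [hv2] at this
    have h1' : E 1 ∈ I := by
      have := hI (E 0) (E 2) _ h3
      rw [hv3] at this
      simpa using I.neg_mem this
    have h0' : E 0 ∈ I := by
      have := hI (E 1) (E 2) _ h3; rwa [hv4] at this
    rw [eq_top_iff]
    intro x _
    rw [E_decomp x]
    exact add_mem (add_mem (add_mem (I.smul_mem _ h0') (I.smul_mem _ h1'))
      (I.smul_mem _ h2')) (I.smul_mem _ h3)
  have key1 : E 1 ∈ I → I = ⊤ := by
    intro h1
    apply key3
    have := hI (E 0) (E 2) _ h1; rwa [c021] at this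
  -- decompose v and compute images
  have hdec := E_decomp v
  -- Bv = b e2 e3 v = v 1 • E 0 - v 0 • E 1
  have hBv : b (E 2) (E 3) v = v 1 • E 0 - v 0 • E 1 := by
    nth_rewrite 1 [hdec]
    simp only [map_add, map_smul, c230, c231, hxyx, hzz]
    module
  -- Av = b e0 e1 v = v 3 • E 2 - v 2 • E 3
  have hAv : b (E 0) (E 1) v = v 3 • E 2 - v 2 • E 3 := by
    nth_rewrite 1 [hdec]
    simp only [map_add, map_smul, hv1, hv2, hxyx]
    have h011 : b (E 0) (E 1) (E 1) = 0 := hzz _ _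
    rw [h011]
    module
  have hBvI : b (E 2) (E 3) v ∈ I := hI _ _ _ hvI
  have hAvI : b (E 0) (E 1) v ∈ I := hI _ _ _ hvI
  -- C(Bv) = -v 0 • E 3
  have hCBv : b (E 0) (E 2) (b (E 2) (E 3) v) = -v 0 • E 3 := by
    rw [hBv]
    simp only [map_sub, map_smul, c021, hxyx]
    module
  -- E'(Bv) = -v 1 • E 3
  have hEBv : b (E 1) (E 2) (b (E 2) (E 3) v) = -v 1 • E 3 := by
    rw [hBv]
    simp only [map_sub, map_smul, c120]
    have h121 : b (E 1) (E 2) (E 1) = 0 := hxyx _ _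
    rw [h121]
    module
  -- C(Av) = v 2 • E 1
  have hCAv : b (E 0) (E 2) (b (E 0) (E 1) v) = v 2 • E 1 := by
    rw [hAv]
    simp only [map_sub, map_smul, hzz, hv3]
    module
  -- D(Av) = v 3 • E 1
  have hDAv : b (E 0) (E 3) (b (E 0) (E 1) v) = v 3 • E 1 := by
    rw [hAv]
    simp only [map_sub, map_smul, c032, hzz]
    module
  -- some coordinate of v is nonzero
  have : ∃ i, v i ≠ 0 := by
    by_contra h
    push_neg at h
    exact hvne (funext h)
  obtain ⟨i, hi⟩ := this
  have smul_extract : ∀ (c : ℂ) (w : Fin 4 → ℂ), c ≠ 0 → c • w ∈ I → w ∈ I := by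
    intro c w hc hw
    have := I.smul_mem c⁻¹ hw
    rwa [smul_smul, inv_mul_cancel₀ hc, one_smul] at this
  fin_cases i
  · apply key3
    apply smul_extract (-v 0) _ (neg_ne_zero.mpr hi)
    rw [← hCBv]
    exact hI _ _ _ hBvI
  · apply key3
    apply smul_extract (-v 1) _ (neg_ne_zero.mpr hi)
    rw [← hEBv]
    exact hI _ _ _ hBvI
  · apply key1
    apply smul_extract (v 2) _ hi
    rw [← hCAv]
    exact hI _ _ _ hAvI
  · apply key1
    apply smul_extract (v 3) _ hi
    rw [← hDAv]
    exact hI _ _ _ hAvI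
end

section
/- If L is a simple LATKe, then L is irreducible as a module over Der(L): the only subspaces W ⊆ L satisfying D(W) ⊆ W for every derivation D of L are W = 0 and W = L. -/
variable {k L : Type*} [Field k] [AddCommGroup L] [Module k L]

/-- A derivation of a LATKe: a linear map `D` with
`D [x,y,z] = [Dx,y,z] + [x,Dy,z] + [x,y,Dz]`. -/
def IsDeriv3 (b : TriBracket k L) (D : L →ₗ[k] L) : Prop :=
  ∀ x y z : L, D (b x y z) = b (D x) y z + b x (D y) z + b x y (D z)

theorem simple_irreducible_Der (b : TriBracket k L)
    (halt : IsAlt3 b) (hjac : Jacobi3 b) (hsimple : IsSimpleLATKe b) :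
    ∀ W : Submodule k L,
      (∀ D : L →ₗ[k] L, IsDeriv3 b D → ∀ w ∈ W, D w ∈ W) → W = ⊥ ∨ W = ⊤ := by
  intro W hW
  refine hsimple.2 W ?_
  intro x y z hz
  exact hW (b x y) (fun z₁ z₂ z₃ => hjac x y z₁ z₂ z₃) z hz
end

section
/- For every integer n ≥ 2, the n-linear, totally antisymmetric bracket on ℂ^{n+1} defined in coordinates by [v₁,…,vₙ]_a = Σ ε_{a b₁ … bₙ} (v₁)_{b₁} ⋯ (vₙ)_{bₙ}, where ε is the totally antisymmetric Levi-Civita symbol on n+1 indices, satisfies the Jacobi identity of the n-th kind: [x₁,…,x_{n−1},[z₁,…,zₙ]] = Σ_{i=1}^{n} [z₁,…,[x₁,…,x_{n−1},zᵢ],…,zₙ] for all xⱼ, zᵢ ∈ ℂ^{n+1}. Hence ℂ^{n+1} with this bracket is a Lie algebra of the n-th kind (LAnKe). -/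
/-!
STATEMENT 18: For every integer n ≥ 2, the n-linear, totally antisymmetric
bracket on ℂ^{n+1} defined in coordinates by
  [v₁,…,vₙ]_a = Σ ε_{a b₁ … bₙ} (v₁)_{b₁} ⋯ (vₙ)_{bₙ},
where ε is the totally antisymmetric Levi-Civita symbol on n+1 indices,
satisfies the Jacobi identity of the n-th kind.  Hence ℂ^{n+1} with this
bracket is a Lie algebra of the n-th kind (LAnKe).

Here we write `n = m + 1` (so `n ≥ 2` becomes `m ≥ 1`).  The Levi-Civita
contraction `Σ ε_{a b₁ … bₙ} (v₁)_{b₁} ⋯ (vₙ)_{bₙ}` is the determinant of the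
(n+1) × (n+1) matrix whose rows are `e_a, v₁, …, vₙ`.
-/

/-- The `n`-linear totally antisymmetric bracket on `ℂ^{n+1}` (with `n = m+1`)
given by the Levi-Civita symbol:
`[v₁,…,vₙ]_a = Σ ε_{a b₁ … bₙ} (v₁)_{b₁} ⋯ (vₙ)_{bₙ}`, i.e. the determinant
of the matrix with rows `e_a, v₁, …, vₙ`. -/
noncomputable def lankeBracket (m : ℕ) (v : Fin (m + 1) → (Fin (m + 2) → ℂ)) :
    Fin (m + 2) → ℂ :=
  fun a => Matrix.det (Matrix.of (Fin.cons (Pi.single a 1) v))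

namespace LankeAux

open Matrix Function

variable {m : ℕ}

/-- Determinant as alternating map in the rows. -/
noncomputable def DD (m : ℕ) : (Fin (m+2) → ℂ) [⋀^(Fin (m+2))]→ₗ[ℂ] ℂ :=
  Matrix.detRowAlternating

lemma lankeBracket_apply (v : Fin (m+1) → (Fin (m+2) → ℂ)) (a : Fin (m+2)) :
    lankeBracket m v a = DD m (Fin.cons (Pi.single a 1) v) := rfl

lemma single_sum (w : Fin (m+2) → ℂ) :
    ∑ b, w b • (Pi.single b 1 : Fin (m+2) → ℂ) = w := by
  simp_rw [← Pi.single_smul, smul_eq_mul, mul_one, Finset.univ_sum_single]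

lemma det_update_sum (v : Fin (m+2) → (Fin (m+2) → ℂ)) (k : Fin (m+2))
    (w : Fin (m+2) → ℂ) :
    DD m (update v k w) = ∑ b, w b * DD m (update v k (Pi.single b 1)) := by
  conv_lhs => rw [← single_sum w]
  rw [(DD m).map_update_sum Finset.univ k
    (fun b => w b • (Pi.single b 1 : Fin (m+2) → ℂ)) v]
  simp [ (DD m).map_update_smul ]

lemma det_cons_sum (w : Fin (m+2) → ℂ) (v : Fin (m+1) → (Fin (m+2) → ℂ)) :
    DD m (Fin.cons w v) = ∑ b, w b * DD m (Fin.cons (Pi.single b 1) v) := by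
  have h := det_update_sum (Fin.cons w v) 0 w
  simpa [Fin.update_cons_zero] using h

lemma det_snoc_sum (q : Fin (m+1) → (Fin (m+2) → ℂ)) (w : Fin (m+2) → ℂ) :
    DD m (Fin.snoc q w) = ∑ b, w b * DD m (Fin.snoc q (Pi.single b 1)) := by
  have h := det_update_sum (Fin.snoc q w) (Fin.last (m+1)) w
  simpa [Fin.update_snoc_last] using h

lemma zero_ne_last : (0 : Fin (m+2)) ≠ Fin.last (m+1) := by
  intro h
  have := congrArg Fin.val h
  simp [Fin.last] at this

/-- swap first and last rows. -/
lemma det_swap_ends (u w : Fin (m+2) → ℂ) (x : Fin m → (Fin (m+2) → ℂ)) :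
    DD m (Fin.snoc (Fin.cons u x) w) = - DD m (Fin.snoc (Fin.cons w x) u) := by
  have hfun : Fin.snoc (Fin.cons w x) u
      = (Fin.snoc (Fin.cons u x) w) ∘ Equiv.swap (0 : Fin (m+2)) (Fin.last (m+1)) := by
    funext i
    induction i using Fin.lastCases with
    | last =>
        simp only [Function.comp_apply, Equiv.swap_apply_right, Fin.snoc_last]
        rw [show (0 : Fin (m+2)) = Fin.castSucc 0 by simp]
        rw [Fin.snoc_castSucc]
        simp
    | cast j =>
        induction j using Fin.cases with
        | zero =>
            rw [Fin.snoc_castSucc]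
            simp
        | succ k =>
            have h1 : Fin.castSucc (Fin.succ k) ≠ (0 : Fin (m+2)) := by
              rw [Fin.castSucc_fin_succ]
              exact Fin.succ_ne_zero _
            have h2 : Fin.castSucc (Fin.succ k) ≠ Fin.last (m+1) :=
              (Fin.castSucc_lt_last _).ne
            simp only [Function.comp_apply, Equiv.swap_apply_of_ne_of_ne h1 h2,
              Fin.snoc_castSucc, Fin.cons_succ]
  rw [hfun, AlternatingMap.map_swap _ _ zero_ne_last, neg_neg]


/-- The linear map `u ↦ [x₁,…,x_m,u]`. -/
noncomputable def Tmap (x : Fin m → (Fin (m+2) → ℂ)) :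
    (Fin (m+2) → ℂ) →ₗ[ℂ] (Fin (m+2) → ℂ) where
  toFun u := lankeBracket m (Fin.snoc x u)
  map_add' u v := by
    funext a
    simp only [Pi.add_apply, lankeBracket_apply, Fin.cons_snoc_eq_snoc_cons]
    have h : ∀ w : Fin (m+2) → ℂ, Fin.snoc (Fin.cons ((Pi.single a 1 : Fin (m+2) → ℂ)) x) w
        = update (Fin.snoc (Fin.cons ((Pi.single a 1 : Fin (m+2) → ℂ)) x) u : Fin (m+2) → (Fin (m+2) → ℂ)) (Fin.last (m+1)) w := by
      intro w; rw [Fin.update_snoc_last]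
    rw [h (u + v), (DD m).map_update_add, ← h u, ← h v]
  map_smul' c u := by
    funext a
    simp only [Pi.smul_apply, lankeBracket_apply, Fin.cons_snoc_eq_snoc_cons,
      RingHom.id_apply, smul_eq_mul]
    have h : ∀ w : Fin (m+2) → ℂ, Fin.snoc (Fin.cons ((Pi.single a 1 : Fin (m+2) → ℂ)) x) w
        = update (Fin.snoc (Fin.cons ((Pi.single a 1 : Fin (m+2) → ℂ)) x) u : Fin (m+2) → (Fin (m+2) → ℂ)) (Fin.last (m+1)) w := by
      intro w; rw [Fin.update_snoc_last]
    rw [h (c • u), (DD m).map_update_smul, ← h u]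
    simp

lemma Tmap_apply (x : Fin m → (Fin (m+2) → ℂ)) (u : Fin (m+2) → ℂ) :
    Tmap x u = lankeBracket m (Fin.snoc x u) := rfl

/-- The multilinear "derivation" map `v ↦ ∑ k, det (v with T applied in slot k)`. -/
noncomputable def Smul' (T : (Fin (m+2) → ℂ) →ₗ[ℂ] (Fin (m+2) → ℂ)) :
    MultilinearMap ℂ (fun _ : Fin (m+2) => (Fin (m+2) → ℂ)) ℂ :=
  ∑ k : Fin (m+2), (DD m).toMultilinearMap.compLinearMap
    (fun j => if j = k then T else LinearMap.id)

lemma Smul'_apply (T : (Fin (m+2) → ℂ) →ₗ[ℂ] (Fin (m+2) → ℂ))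
    (v : Fin (m+2) → (Fin (m+2) → ℂ)) :
    Smul' T v = ∑ k, DD m (update v k (T (v k))) := by
  rw [Smul', MultilinearMap.sum_apply]
  refine Finset.sum_congr rfl fun k _ => ?_
  have hfun : (fun j => (if j = k then T else LinearMap.id) (v j)) = update v k (T (v k)) := by
    funext j
    by_cases h : j = k
    · subst h; simp
    · simp [h, Function.update_of_ne h]
  show (DD m).toMultilinearMap (fun j => (if j = k then T else LinearMap.id) (v j)) = _
  rw [hfun]
  rfl

/-- `Smul'` is alternating. -/
noncomputable def Salt (T : (Fin (m+2) → ℂ) →ₗ[ℂ] (Fin (m+2) → ℂ)) :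
    (Fin (m+2) → ℂ) [⋀^(Fin (m+2))]→ₗ[ℂ] ℂ where
  toMultilinearMap := Smul' T
  map_eq_zero_of_eq' := by
    intro v i j hv hij
    show Smul' T v = 0
    rw [Smul'_apply]
    set g : Fin (m+2) → ℂ := fun k => DD m (update v k (T (v k))) with hg
    have hz : ∀ k ∈ (Finset.univ : Finset (Fin (m+2))), k ∉ ({i, j} : Finset (Fin (m+2))) → g k = 0 := by
      intro k _ hk
      simp only [Finset.mem_insert, Finset.mem_singleton, not_or] at hk
      refine (DD m).map_eq_zero_of_eq _ (i := i) (j := j) ?_ hij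
      rw [Function.update_of_ne (fun h => hk.1 h.symm),
        Function.update_of_ne (fun h => hk.2 h.symm)]
      exact hv
    rw [← Finset.sum_subset (Finset.subset_univ ({i, j} : Finset (Fin (m+2)))) hz,
      Finset.sum_pair hij]
    have hswap : update v j (T (v i)) = (update v i (T (v i))) ∘ Equiv.swap i j := by
      funext k
      by_cases hk : k = i
      · subst hk
        rw [Function.update_of_ne hij, Function.comp_apply, Equiv.swap_apply_left,
          Function.update_of_ne hij.symm, hv]
      · by_cases hk2 : k = j
        · subst hk2
          rw [Function.update_self, Function.comp_apply, Equiv.swap_apply_right,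
            Function.update_self]
        · rw [Function.update_of_ne hk2, Function.comp_apply,
            Equiv.swap_apply_of_ne_of_ne hk hk2, Function.update_of_ne hk]
    have : g j = - g i := by
      rw [hg]
      simp only
      rw [← hv, hswap, AlternatingMap.map_swap _ _ hij]
    rw [this, add_neg_cancel]

lemma Salt_eq_zero (x : Fin m → (Fin (m+2) → ℂ)) : Salt (Tmap x) = 0 := by
  have hb := (Salt (Tmap x)).eq_smul_basis_det (Pi.basisFun ℂ (Fin (m+2)))
  have hcoef : Salt (Tmap x) (Pi.basisFun ℂ (Fin (m+2))) = 0 := by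
    show Smul' (Tmap x) (Pi.basisFun ℂ (Fin (m+2))) = 0
    rw [Smul'_apply]
    have hbasis : ⇑(Pi.basisFun ℂ (Fin (m+2))) = fun b => (Pi.single b 1 : Fin (m+2) → ℂ) := by
      funext b; exact Pi.basisFun_apply ℂ (Fin (m+2)) b
    rw [hbasis]
    have hterm : ∀ k : Fin (m+2),
        DD m (update (fun b => (Pi.single b 1 : Fin (m+2) → ℂ)) k (Tmap x (Pi.single k 1)))
          = 0 := by
      intro k
      rw [det_update_sum]
      have hunit : ∀ b : Fin (m+2),
          DD m (update (fun b => (Pi.single b 1 : Fin (m+2) → ℂ)) k (Pi.single b 1))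
            = if b = k then 1 else 0 := by
        intro b
        by_cases hbk : b = k
        · subst hbk
          rw [Function.update_eq_self]
          simp only [if_pos rfl]
          have : Matrix.of (fun b => (Pi.single b 1 : Fin (m+2) → ℂ)) = (1 : Matrix (Fin (m+2)) (Fin (m+2)) ℂ) := by
            ext i j
            simp [Matrix.one_apply, Pi.single_apply, eq_comm]
          show Matrix.det (Matrix.of (fun b => (Pi.single b 1 : Fin (m+2) → ℂ))) = 1
          rw [this, Matrix.det_one]
        · rw [if_neg hbk]
          refine (DD m).map_eq_zero_of_eq _ (i := b) (j := k) ?_ hbk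
          rw [Function.update_of_ne hbk, Function.update_self]
      simp only [hunit, mul_ite, mul_one, mul_zero]
      rw [Finset.sum_ite_eq' Finset.univ k (fun b => Tmap x (Pi.single k 1) b)]
      simp only [Finset.mem_univ, if_pos]
      -- now: (Tmap x (Pi.single k 1)) k = 0
      show lankeBracket m (Fin.snoc x (Pi.single k 1)) k = 0
      rw [lankeBracket_apply]
      refine (DD m).map_eq_zero_of_eq _ (i := (0 : Fin (m+2))) (j := Fin.last (m+1)) ?_ zero_ne_last
      rw [Fin.cons_zero, show Fin.last (m+1) = Fin.succ (Fin.last m) from (Fin.succ_last m).symm,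
        Fin.cons_succ, Fin.snoc_last]
    simp [hterm]
  rw [hb, hcoef, zero_smul]

end LankeAux

/-- The Levi-Civita bracket on `ℂ^{n+1}` satisfies the Jacobi identity of the
n-th kind (`n = m + 1 ≥ 2`):
`[x₁,…,x_{n−1},[z₁,…,zₙ]] = Σ_{i=1}^{n} [z₁,…,[x₁,…,x_{n−1},zᵢ],…,zₙ]`. -/


theorem lanke_jacobi (m : ℕ) (hm : 1 ≤ m)
    (x : Fin m → (Fin (m + 2) → ℂ)) (z : Fin (m + 1) → (Fin (m + 2) → ℂ)) :
    lankeBracket m (Fin.snoc x (lankeBracket m z))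
      = ∑ i : Fin (m + 1),
          lankeBracket m
            (Function.update z i (lankeBracket m (Fin.snoc x (z i)))) := by
    classical
  funext a
  have h0 : LankeAux.Smul' (LankeAux.Tmap x) (Fin.cons (Pi.single a 1) z) = 0 := by
    have h1 := LankeAux.Salt_eq_zero (m := m) x
    have h := DFunLike.congr_fun h1 (Fin.cons (Pi.single a 1) z)
    exact (by simpa using h : LankeAux.Salt (LankeAux.Tmap x) (Fin.cons (Pi.single a 1) z) = 0)
  rw [LankeAux.Smul'_apply, Fin.sum_univ_succ] at h0
  simp only [Fin.cons_zero, Fin.update_cons_zero, Fin.cons_succ, ← Fin.cons_update] at h0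
  have hL : lankeBracket m (Fin.snoc x (lankeBracket m z)) a
      = - LankeAux.DD m (Fin.cons (LankeAux.Tmap x (Pi.single a 1)) z) := by
    rw [LankeAux.lankeBracket_apply, Fin.cons_snoc_eq_snoc_cons, LankeAux.det_snoc_sum]
    have hterm : ∀ b : Fin (m+2),
        lankeBracket m z b
            * LankeAux.DD m (Fin.snoc (Fin.cons ((Pi.single a 1 : Fin (m+2) → ℂ)) x) (Pi.single b 1))
          = -(LankeAux.Tmap x (Pi.single a 1) b
            * LankeAux.DD m (Fin.cons ((Pi.single b 1 : Fin (m+2) → ℂ)) z)) := by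
      intro b
      rw [LankeAux.det_swap_ends, LankeAux.lankeBracket_apply]
      have hbb : LankeAux.DD m (Fin.snoc (Fin.cons ((Pi.single b 1 : Fin (m+2) → ℂ)) x) (Pi.single a 1))
          = LankeAux.Tmap x (Pi.single a 1) b := by
        rw [LankeAux.Tmap_apply, LankeAux.lankeBracket_apply, Fin.cons_snoc_eq_snoc_cons]
      rw [hbb]
      ring
    rw [Finset.sum_congr rfl (fun b _ => hterm b), Finset.sum_neg_distrib,
      ← LankeAux.det_cons_sum]
  rw [hL]
  have hR : ∀ i : Fin (m+1),
      lankeBracket m (Function.update z i (lankeBracket m (Fin.snoc x (z i)))) a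
        = LankeAux.DD m (Fin.cons (Pi.single a 1) (Function.update z i (LankeAux.Tmap x (z i)))) := by
    intro i
    rw [LankeAux.lankeBracket_apply, LankeAux.Tmap_apply]
  simp only [Finset.sum_apply]
  rw [Finset.sum_congr rfl (fun i _ => hR i)]
  linear_combination -h0
end
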